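/- Let w(v) = (1 + |v|²)^{β/2} e^{ϖ|v|²} with β > 3 and 0 < ϖ ≤ 1/8. Then there exists C > 0 such that for every v ∈ ℝ³, ∫_{ℝ³} (|v−u| + |v−u|^{−1}) e^{−|v−u|²/8} e^{−(|v|²−|u|²)²/(8|v−u|²)} · (w(v)/w(u)) du ≤ C (1 + |v|)^{−1}. -/

import Mathlib

open Real MeasureTheory

noncomputable section

/-- Velocity space `ℝ³`. -/
abbrev V := EuclideanSpace ℝ (Fin 3)

/-- The weight function `w(v) = (1+|v|²)^{β/2} e^{ϖ|v|²}`. -/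
def wt (β ϖ : ℝ) (v : V) : ℝ := (1 + ‖v‖ ^ 2) ^ (β / 2) * Real.exp (ϖ * ‖v‖ ^ 2)

set_option maxHeartbeats 1000000

section Aux
open Set

namespace S7

def p (γ : ℝ) (x : ℝ) : ℝ := (1 + x ^ 2) ^ γ * Real.exp (-x ^ 2 / 64)
def φs (γ : ℝ) (x : ℝ) : ℝ := p γ x * (1 + |x| ^ (-(1/2) : ℝ))
def φm (γ a : ℝ) (x : ℝ) : ℝ := p γ x * Real.exp (-(a / 16) * |x|)

def F (β ϖ : ℝ) (v u : V) : ℝ :=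
  (‖v - u‖ + ‖v - u‖⁻¹) * Real.exp (-‖v - u‖ ^ 2 / 8) *
    Real.exp (-(‖v‖ ^ 2 - ‖u‖ ^ 2) ^ 2 / (8 * ‖v - u‖ ^ 2)) *
    (wt β ϖ v / wt β ϖ u)

def e0 : V := EuclideanSpace.single 0 1

lemma one_add_le (c x : ℝ) (hc : 1 ≤ c) : 1 + x ^ 2 ≤ c * Real.exp (x ^ 2 / c) := by
  have h0 : (0:ℝ) < c := by linarith
  have h := Real.add_one_le_exp (x ^ 2 / c)
  have := mul_le_mul_of_nonneg_left h h0.le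
  have hx : 0 ≤ x ^ 2 := sq_nonneg x
  calc 1 + x ^ 2 ≤ c + x ^ 2 := by linarith
    _ = c * (x ^ 2 / c + 1) := by field_simp; ring
    _ ≤ c * Real.exp (x ^ 2 / c) := by nlinarith [Real.add_one_le_exp (x ^ 2 / c)]

lemma pow_aux (γ c x : ℝ) (hγ : 0 ≤ γ) (hc : 1 ≤ c * γ) :
    (1 + x ^ 2) ^ γ ≤ (c * γ) ^ γ * Real.exp (γ * x ^ 2 / (c * γ)) := by
  have h0 : (0:ℝ) < c * γ := by linarith
  have h1 : 1 + x ^ 2 ≤ (c * γ) * Real.exp (x ^ 2 / (c * γ)) := one_add_le _ _ hc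
  have h2 : (1 + x ^ 2) ^ γ ≤ ((c * γ) * Real.exp (x ^ 2 / (c * γ))) ^ γ := by
    apply Real.rpow_le_rpow (by positivity) h1 hγ
  calc (1 + x ^ 2) ^ γ ≤ ((c * γ) * Real.exp (x ^ 2 / (c * γ))) ^ γ := h2
    _ = (c * γ) ^ γ * Real.exp (γ * x ^ 2 / (c * γ)) := by
        rw [Real.mul_rpow h0.le (Real.exp_pos _).le, ← Real.exp_mul]
        ring_nf

lemma p_le (γ x : ℝ) (hγ : 0 ≤ γ) (hc : 1 ≤ 64 * γ) : p γ x ≤ (64 * γ) ^ γ := by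
  unfold p
  have := pow_aux γ 64 x hγ hc
  have hγ0 : (0:ℝ) < γ := by nlinarith
  have he : γ * x ^ 2 / (64 * γ) = x ^ 2 / 64 := by field_simp
  rw [he] at this
  calc (1 + x ^ 2) ^ γ * Real.exp (-x ^ 2 / 64)
      ≤ ((64 * γ) ^ γ * Real.exp (x ^ 2 / 64)) * Real.exp (-x ^ 2 / 64) := by
        apply mul_le_mul_of_nonneg_right this (Real.exp_pos _).le
    _ = (64 * γ) ^ γ := by rw [mul_assoc, ← Real.exp_add]; ring_nf; simp

lemma p_le' (γ x : ℝ) (hγ : 0 ≤ γ) (hc : 1 ≤ 128 * γ) :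
    p γ x ≤ (128 * γ) ^ γ * Real.exp (-x ^ 2 / 128) := by
  unfold p
  have := pow_aux γ 128 x hγ hc
  have hγ0 : (0:ℝ) < γ := by nlinarith
  have he : γ * x ^ 2 / (128 * γ) = x ^ 2 / 128 := by field_simp
  rw [he] at this
  calc (1 + x ^ 2) ^ γ * Real.exp (-x ^ 2 / 64)
      ≤ ((128 * γ) ^ γ * Real.exp (x ^ 2 / 128)) * Real.exp (-x ^ 2 / 64) := by
        apply mul_le_mul_of_nonneg_right this (Real.exp_pos _).le
    _ = (128 * γ) ^ γ * Real.exp (-x ^ 2 / 128) := by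
        rw [mul_assoc, ← Real.exp_add]; ring_nf

lemma integrable_of_even {f : ℝ → ℝ} (he : ∀ x, f (-x) = f x)
    (h : IntegrableOn f (Ioi 0)) : Integrable f := by
  have h3 : IntegrableOn f (Iic 0) := by
    rw [← Measure.map_neg_eq_self (volume : Measure ℝ)]
    have m : MeasurableEmbedding fun x : ℝ => -x := (Homeomorph.neg ℝ).measurableEmbedding
    rw [m.integrableOn_map_iff]
    have : (fun x : ℝ => f (-x)) = f := funext he
    simp only [Function.comp_def, this, Set.neg_preimage, Set.neg_Iic, neg_zero]
    exact (integrableOn_Ici_iff_integrableOn_Ioi).mpr h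
  have := h3.union h
  rwa [Set.Iic_union_Ioi, integrableOn_univ] at this

lemma integrable_gauss : Integrable (fun x : ℝ => Real.exp (-x ^ 2 / 128)) := by
  have := integrable_exp_neg_mul_sq (b := (1/128 : ℝ)) (by norm_num)
  convert this using 2 with x
  ring_nf

lemma integrable_rpow_gauss :
    Integrable (fun x : ℝ => |x| ^ (-(1/2) : ℝ) * Real.exp (-x ^ 2 / 128)) := by
  apply integrable_of_even (fun x => by rw [abs_neg, neg_sq])
  have h := integrableOn_rpow_mul_exp_neg_mul_sq (b := (1/128 : ℝ)) (by norm_num)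
      (s := (-(1/2) : ℝ)) (by norm_num)
  apply (h.congr_fun (fun x hx => ?_) measurableSet_Ioi)
  rw [abs_of_pos hx]
  ring_nf

lemma integrable_exp_abs {c : ℝ} (hc : 0 < c) :
    Integrable (fun x : ℝ => Real.exp (-c * |x|)) := by
  apply integrable_of_even (fun x => by rw [abs_neg])
  apply (exp_neg_integrableOn_Ioi 0 hc).congr_fun (fun x hx => ?_) measurableSet_Ioi
  rw [abs_of_pos hx]

lemma integral_exp_abs {c : ℝ} (hc : 0 < c) :
    ∫ x : ℝ, Real.exp (-c * |x|) = 2 / c := by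
  rw [integral_comp_abs (f := fun x => Real.exp (-c * x))]
  have h2 : ∀ x : ℝ, Real.exp (-c * x) = Real.exp (-(c * x)) := fun x => by ring_nf
  simp_rw [h2]
  rw [integral_comp_mul_left_Ioi (fun x => Real.exp (-x)) 0 hc]
  simp only [mul_zero, integral_exp_neg_Ioi, neg_zero, Real.exp_zero, smul_eq_mul, mul_one]
  field_simp

lemma key_exp {ϖ s D I : ℝ} (hs : 0 < s) (hϖ0 : 0 ≤ ϖ) (hϖ : ϖ ≤ 1/8)
    (hI : 2 * I = D + s ^ 2) :
    -s ^ 2 / 8 - D ^ 2 / (8 * s ^ 2) + ϖ * D ≤ -s ^ 2 / 64 - |I| / 16 := by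
  set q := D / s with hq
  have hD : D = q * s := by rw [hq, div_mul_cancel₀ D hs.ne']
  have hDq : D ^ 2 / (8 * s ^ 2) = q ^ 2 / 8 := by
    rw [hD]; field_simp
  rw [hDq, hD]
  have hqs : 0 ≤ |q| * s := mul_nonneg (abs_nonneg q) hs.le
  have h1 : ϖ * (q * s) ≤ |q| * s / 8 := by
    have h2 : ϖ * (q * s) ≤ |ϖ * (q * s)| := le_abs_self _
    have h3 : |ϖ * (q * s)| = ϖ * (|q| * s) := by
      rw [abs_mul, abs_mul, abs_of_nonneg hϖ0, abs_of_pos hs]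
    nlinarith [mul_le_mul_of_nonneg_right hϖ hqs]
  have hIabs : |I| ≤ (|q| * s + s ^ 2) / 2 := by
    have h4 : I = (q * s + s ^ 2) / 2 := by rw [hD] at hI; linarith
    rw [h4]
    have h3 : |(q * s + s ^ 2) / 2| ≤ (|q * s| + |s ^ 2|) / 2 := by
      rw [abs_div]
      have := abs_add_le (q * s) (s ^ 2)
      rw [abs_of_pos (by norm_num : (0:ℝ) < 2)]
      linarith
    rw [abs_mul, abs_of_pos hs, abs_of_nonneg (sq_nonneg s)] at h3
    linarith
  have e1 : q ^ 2 + s ^ 2 - 2 * (|q| * s) ≥ 0 := by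
    nlinarith [sq_nonneg (|q| - s), sq_abs q]
  nlinarith [sq_nonneg q, e1]

lemma wt_pos (β ϖ : ℝ) (v : V) : 0 < wt β ϖ v := by
  unfold wt; positivity

/-- invariant pointwise bound -/
lemma ptwise {β ϖ : ℝ} (hβ : 3 < β) (hϖ0 : 0 < ϖ) (hϖ : ϖ ≤ 1/8) (v u : V) :
    (‖v - u‖ + ‖v - u‖⁻¹) * Real.exp (-‖v - u‖ ^ 2 / 8) *
      Real.exp (-(‖v‖ ^ 2 - ‖u‖ ^ 2) ^ 2 / (8 * ‖v - u‖ ^ 2)) *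
      (wt β ϖ v / wt β ϖ u) ≤
    (2:ℝ) ^ (β / 2) * ((‖v - u‖ + ‖v - u‖⁻¹) * (1 + ‖v - u‖ ^ 2) ^ (β / 2) *
      Real.exp (-‖v - u‖ ^ 2 / 64) * Real.exp (-|@inner ℝ _ _ v (v - u)| / 16)) := by
  by_cases h0 : v - u = 0
  · simp [h0]
  set s := ‖v - u‖ with hsdef
  have hs : 0 < s := norm_pos_iff.2 h0
  set D := ‖v‖ ^ 2 - ‖u‖ ^ 2 with hD
  set I := (@inner ℝ _ _ v (v - u) : ℝ) with hI
  have hI2 : 2 * I = D + s ^ 2 := by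
    have h := @norm_sub_sq_real V _ _ v (v - u)
    have hvu : v - (v - u) = u := by abel
    rw [hvu] at h
    rw [hI, hD, hsdef]
    linarith
  have hratio : wt β ϖ v / wt β ϖ u
      = ((1 + ‖v‖ ^ 2) / (1 + ‖u‖ ^ 2)) ^ (β / 2) * Real.exp (ϖ * D) := by
    unfold wt
    rw [mul_div_mul_comm, ← Real.exp_sub, ← Real.div_rpow (by positivity) (by positivity)]
    congr 1
    rw [hD]; ring
  have hE : Real.exp (-s ^ 2 / 8) * Real.exp (-D ^ 2 / (8 * s ^ 2)) * Real.exp (ϖ * D)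
      ≤ Real.exp (-s ^ 2 / 64) * Real.exp (-|I| / 16) := by
    rw [← Real.exp_add, ← Real.exp_add, ← Real.exp_add]
    apply Real.exp_le_exp.mpr
    have h9 := key_exp hs hϖ0.le hϖ hI2
    linear_combination h9
  have hR : ((1 + ‖v‖ ^ 2) / (1 + ‖u‖ ^ 2)) ^ (β / 2)
      ≤ (2:ℝ) ^ (β / 2) * (1 + s ^ 2) ^ (β / 2) := by
    have hv : ‖v‖ ≤ ‖u‖ + s := by
      have h5 : v = u + (v - u) := by abel
      calc ‖v‖ = ‖u + (v - u)‖ := by rw [← h5]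
        _ ≤ ‖u‖ + ‖v - u‖ := norm_add_le _ _
    have hb : (1 + ‖v‖ ^ 2) / (1 + ‖u‖ ^ 2) ≤ 2 * (1 + s ^ 2) := by
      rw [div_le_iff₀ (by positivity)]
      nlinarith [norm_nonneg u, hs.le, sq_nonneg (‖u‖ - s), sq_nonneg (‖u‖ * s), norm_nonneg v]
    calc ((1 + ‖v‖ ^ 2) / (1 + ‖u‖ ^ 2)) ^ (β / 2)
        ≤ (2 * (1 + s ^ 2)) ^ (β / 2) :=
          Real.rpow_le_rpow (by positivity) hb (by linarith)
      _ = (2:ℝ) ^ (β / 2) * (1 + s ^ 2) ^ (β / 2) :=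
          Real.mul_rpow (by norm_num) (by positivity)
  rw [hratio]
  calc (s + s⁻¹) * Real.exp (-s ^ 2 / 8) * Real.exp (-D ^ 2 / (8 * s ^ 2)) *
        (((1 + ‖v‖ ^ 2) / (1 + ‖u‖ ^ 2)) ^ (β / 2) * Real.exp (ϖ * D))
      = (s + s⁻¹) * ((1 + ‖v‖ ^ 2) / (1 + ‖u‖ ^ 2)) ^ (β / 2) *
        (Real.exp (-s ^ 2 / 8) * Real.exp (-D ^ 2 / (8 * s ^ 2)) * Real.exp (ϖ * D)) := by
        ring
    _ ≤ (s + s⁻¹) * ((2:ℝ) ^ (β / 2) * (1 + s ^ 2) ^ (β / 2)) *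
        (Real.exp (-s ^ 2 / 64) * Real.exp (-|I| / 16)) := by
        apply mul_le_mul (mul_le_mul_of_nonneg_left hR (by positivity)) hE (by positivity)
          (by positivity)
    _ = (2:ℝ) ^ (β / 2) * ((s + s⁻¹) * (1 + s ^ 2) ^ (β / 2) *
        Real.exp (-s ^ 2 / 64) * Real.exp (-|I| / 16)) := by ring

lemma norm_sq_coords (ζ : V) : ‖ζ‖ ^ 2 = ζ 0 ^ 2 + ζ 1 ^ 2 + ζ 2 ^ 2 := by
  rw [EuclideanSpace.norm_eq, Real.sq_sqrt (by positivity)]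
  simp [Fin.sum_univ_three, Real.norm_eq_abs, sq_abs]

lemma coord_bound {β : ℝ} (hβ : 3 < β) {a : ℝ} (ha : 0 ≤ a) (ζ : V)
    (h1 : ζ 1 ≠ 0) (h2 : ζ 2 ≠ 0) :
    (‖ζ‖ + ‖ζ‖⁻¹) * (1 + ‖ζ‖ ^ 2) ^ (β / 2) * Real.exp (-‖ζ‖ ^ 2 / 64) *
      Real.exp (-|a * ζ 0| / 16) ≤
    φm ((β + 1)/2) a (ζ 0) * (φs ((β + 1)/2) (ζ 1) * φs ((β + 1)/2) (ζ 2)) := by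
  set γ := (β + 1)/2 with hγdef
  have hγ0 : (0:ℝ) < γ := by rw [hγdef]; linarith
  set A := ζ 0 with hA
  set B := ζ 1 with hB
  set C := ζ 2 with hC
  set s := ‖ζ‖ with hsdef
  have hsum : s ^ 2 = A ^ 2 + B ^ 2 + C ^ 2 := norm_sq_coords ζ
  have hs0 : 0 ≤ s := norm_nonneg ζ
  have hB2 : 0 < B ^ 2 := lt_of_le_of_ne (sq_nonneg B) (Ne.symm (pow_ne_zero 2 h1))
  have hC2 : 0 < C ^ 2 := lt_of_le_of_ne (sq_nonneg C) (Ne.symm (pow_ne_zero 2 h2))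
  have hs : 0 < s := by nlinarith [sq_nonneg A]
  have hBabs : 0 < |B| := abs_pos.2 h1
  have hCabs : 0 < |C| := abs_pos.2 h2
  set Bh := |B| ^ (-(1/2) : ℝ) with hBh
  set Ch := |C| ^ (-(1/2) : ℝ) with hCh
  have hBh0 : 0 ≤ Bh := Real.rpow_nonneg (abs_nonneg B) _
  have hCh0 : 0 ≤ Ch := Real.rpow_nonneg (abs_nonneg C) _
  have hsq_half : ∀ x : ℝ, 0 ≤ x → (x ^ 2) ^ ((1:ℝ)/2) = x := by
    intro x hx
    rw [← Real.rpow_natCast x 2, ← Real.rpow_mul hx]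
    norm_num
  -- s⁻¹ ≤ Bh * Ch
  have hinv : s⁻¹ ≤ Bh * Ch := by
    have hBs : |B| ≤ s := by nlinarith [abs_nonneg B, sq_abs B]
    have hCs : |C| ≤ s := by nlinarith [abs_nonneg C, sq_abs C]
    have hBC : |B| * |C| ≤ s ^ 2 := by nlinarith
    have hroot : (|B| * |C|) ^ ((1:ℝ)/2) ≤ s := by
      calc (|B| * |C|) ^ ((1:ℝ)/2) ≤ (s ^ 2) ^ ((1:ℝ)/2) :=
            Real.rpow_le_rpow (by positivity) hBC (by norm_num)
        _ = s := hsq_half s hs0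
    have hrootpos : 0 < (|B| * |C|) ^ ((1:ℝ)/2) := Real.rpow_pos_of_pos (by positivity) _
    have : s⁻¹ ≤ ((|B| * |C|) ^ ((1:ℝ)/2))⁻¹ := inv_anti₀ hrootpos hroot
    calc s⁻¹ ≤ ((|B| * |C|) ^ ((1:ℝ)/2))⁻¹ := this
      _ = (|B| * |C|) ^ (-(1/2) : ℝ) := by
          rw [← Real.rpow_neg (by positivity)]
      _ = Bh * Ch := Real.mul_rpow (abs_nonneg B) (abs_nonneg C)
  have hX1 : (1:ℝ) ≤ (1 + s ^ 2) ^ ((1:ℝ)/2) := by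
    calc (1:ℝ) = 1 ^ ((1:ℝ)/2) := (Real.one_rpow _).symm
      _ ≤ (1 + s ^ 2) ^ ((1:ℝ)/2) :=
          Real.rpow_le_rpow zero_le_one (by nlinarith) (by norm_num)
  have hsX : s ≤ (1 + s ^ 2) ^ ((1:ℝ)/2) := by
    calc s = (s ^ 2) ^ ((1:ℝ)/2) := (hsq_half s hs0).symm
      _ ≤ (1 + s ^ 2) ^ ((1:ℝ)/2) :=
          Real.rpow_le_rpow (sq_nonneg s) (by linarith) (by norm_num)
  have h_first : (s + s⁻¹) * (1 + s ^ 2) ^ (β / 2)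
      ≤ (1 + s ^ 2) ^ γ * (1 + Bh * Ch) := by
    have h6 : s + s⁻¹ ≤ (1 + s ^ 2) ^ ((1:ℝ)/2) * (1 + Bh * Ch) := by
      have h7 : Bh * Ch ≤ (1 + s ^ 2) ^ ((1:ℝ)/2) * (Bh * Ch) :=
        le_mul_of_one_le_left (by positivity) hX1
      have h8 : (1 + s ^ 2) ^ ((1:ℝ)/2) * (1 + Bh * Ch)
          = (1 + s ^ 2) ^ ((1:ℝ)/2) + (1 + s ^ 2) ^ ((1:ℝ)/2) * (Bh * Ch) := by ring
      rw [h8]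
      exact add_le_add hsX (le_trans hinv h7)
    calc (s + s⁻¹) * (1 + s ^ 2) ^ (β / 2)
        ≤ ((1 + s ^ 2) ^ ((1:ℝ)/2) * (1 + Bh * Ch)) * (1 + s ^ 2) ^ (β / 2) :=
          mul_le_mul_of_nonneg_right h6 (by positivity)
      _ = ((1 + s ^ 2) ^ ((1:ℝ)/2) * (1 + s ^ 2) ^ (β / 2)) * (1 + Bh * Ch) := by ring
      _ = (1 + s ^ 2) ^ γ * (1 + Bh * Ch) := by
          rw [← Real.rpow_add (by positivity), hγdef,
            show (1:ℝ)/2 + β/2 = (β+1)/2 by ring]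
  have h_poly : (1 + s ^ 2) ^ γ ≤ (1 + A ^ 2) ^ γ * (1 + B ^ 2) ^ γ * (1 + C ^ 2) ^ γ := by
    have hmono : 1 + s ^ 2 ≤ (1 + A ^ 2) * (1 + B ^ 2) * (1 + C ^ 2) := by
      nlinarith [sq_nonneg (A*B), sq_nonneg (A*C), sq_nonneg (B*C), sq_nonneg (A*B*C),
        sq_nonneg A, sq_nonneg B, sq_nonneg C]
    calc (1 + s ^ 2) ^ γ ≤ ((1 + A ^ 2) * (1 + B ^ 2) * (1 + C ^ 2)) ^ γ :=
          Real.rpow_le_rpow (by positivity) hmono hγ0.le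
      _ = (1 + A ^ 2) ^ γ * (1 + B ^ 2) ^ γ * (1 + C ^ 2) ^ γ := by
          rw [Real.mul_rpow (by positivity) (by positivity),
            Real.mul_rpow (by positivity) (by positivity)]
  have h_cross : 1 + Bh * Ch ≤ (1 + Bh) * (1 + Ch) := by nlinarith
  have h_exp : Real.exp (-s ^ 2 / 64)
      = Real.exp (-A ^ 2 / 64) * Real.exp (-B ^ 2 / 64) * Real.exp (-C ^ 2 / 64) := by
    rw [← Real.exp_add, ← Real.exp_add]
    congr 1
    rw [hsum]; ring
  have h_exp2 : Real.exp (-|a * A| / 16) = Real.exp (-(a / 16) * |A|) := by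
    congr 1
    rw [abs_mul, abs_of_nonneg ha]; ring
  rw [h_exp, h_exp2]
  calc (s + s⁻¹) * (1 + s ^ 2) ^ (β / 2) *
        (Real.exp (-A ^ 2 / 64) * Real.exp (-B ^ 2 / 64) * Real.exp (-C ^ 2 / 64)) *
        Real.exp (-(a / 16) * |A|)
      ≤ ((1 + s ^ 2) ^ γ * (1 + Bh * Ch)) *
        (Real.exp (-A ^ 2 / 64) * Real.exp (-B ^ 2 / 64) * Real.exp (-C ^ 2 / 64)) *
        Real.exp (-(a / 16) * |A|) := by
        apply mul_le_mul_of_nonneg_right (mul_le_mul_of_nonneg_right h_first (by positivity))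
          (by positivity)
    _ ≤ (((1 + A ^ 2) ^ γ * (1 + B ^ 2) ^ γ * (1 + C ^ 2) ^ γ) * ((1 + Bh) * (1 + Ch))) *
        (Real.exp (-A ^ 2 / 64) * Real.exp (-B ^ 2 / 64) * Real.exp (-C ^ 2 / 64)) *
        Real.exp (-(a / 16) * |A|) := by
        apply mul_le_mul_of_nonneg_right (mul_le_mul_of_nonneg_right
          (mul_le_mul h_poly h_cross (by positivity) (by positivity)) (by positivity))
          (by positivity)
    _ = φm γ a A * (φs γ B * φs γ C) := by
        unfold φm φs p
        rw [hBh, hCh]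
        ring
lemma p_nonneg (γ x : ℝ) : 0 ≤ p γ x := by unfold p; positivity
lemma φs_nonneg (γ x : ℝ) : 0 ≤ φs γ x := by
  unfold φs
  have := p_nonneg γ x
  positivity
lemma φm_nonneg (γ a x : ℝ) : 0 ≤ φm γ a x := by
  unfold φm
  have := p_nonneg γ x
  positivity

lemma measurable_p (γ : ℝ) : Measurable (p γ) := by unfold p; fun_prop
lemma measurable_φs (γ : ℝ) : Measurable (φs γ) := by unfold φs p; fun_prop
lemma measurable_φm (γ a : ℝ) : Measurable (φm γ a) := by unfold φm p; fun_prop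

lemma integrable_p {γ : ℝ} (hγ : 2 ≤ γ) : Integrable (p γ) := by
  have hγ0 : (0:ℝ) ≤ γ := by linarith
  apply Integrable.mono (integrable_gauss.const_mul ((128 * γ) ^ γ))
    (measurable_p γ).aestronglyMeasurable
  filter_upwards with x
  rw [Real.norm_eq_abs, Real.norm_eq_abs, abs_of_nonneg (p_nonneg γ x),
    abs_of_nonneg (by positivity)]
  exact p_le' γ x hγ0 (by linarith)

lemma integrable_φs {γ : ℝ} (hγ : 2 ≤ γ) : Integrable (φs γ) := by
  have hγ0 : (0:ℝ) ≤ γ := by linarith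
  have hg : Integrable (fun x : ℝ =>
      (128 * γ) ^ γ * (Real.exp (-x ^ 2 / 128) + |x| ^ (-(1/2) : ℝ) * Real.exp (-x ^ 2 / 128))) :=
    (integrable_gauss.add integrable_rpow_gauss).const_mul _
  apply Integrable.mono hg (measurable_φs γ).aestronglyMeasurable
  filter_upwards with x
  rw [Real.norm_eq_abs, Real.norm_eq_abs, abs_of_nonneg (φs_nonneg γ x),
    abs_of_nonneg (by positivity)]
  unfold φs
  have h1 := p_le' γ x hγ0 (by linarith)
  have h2 : (0:ℝ) ≤ |x| ^ (-(1/2) : ℝ) := by positivity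
  nlinarith [p_nonneg γ x, Real.exp_pos (-x ^ 2 / 128),
    Real.rpow_nonneg (le_of_lt (by positivity : (0:ℝ) < 128 * γ)) γ,
    mul_le_mul_of_nonneg_right h1 h2]

lemma φm_le_p (γ a x : ℝ) (ha : 0 ≤ a) : φm γ a x ≤ p γ x := by
  unfold φm
  have h : Real.exp (-(a / 16) * |x|) ≤ 1 := by
    rw [← Real.exp_zero]
    apply Real.exp_le_exp.mpr
    have : 0 ≤ (a / 16) * |x| := by positivity
    linarith
  nlinarith [p_nonneg γ x]

lemma integrable_φm {γ : ℝ} (hγ : 2 ≤ γ) (a : ℝ) (ha : 0 ≤ a) : Integrable (φm γ a) := by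
  apply Integrable.mono (integrable_p hγ) (measurable_φm γ a).aestronglyMeasurable
  filter_upwards with x
  rw [Real.norm_eq_abs, Real.norm_eq_abs, abs_of_nonneg (φm_nonneg γ a x),
    abs_of_nonneg (p_nonneg γ x)]
  exact φm_le_p γ a x ha

lemma intφm_le {γ : ℝ} (hγ : 2 ≤ γ) {a : ℝ} (ha : 0 ≤ a) :
    ∫ x, φm γ a x ≤ (2 * (∫ x, p γ x) + 64 * (64 * γ) ^ γ) / (1 + a) := by
  have hγ0 : (0:ℝ) ≤ γ := by linarith
  have hKp : 0 ≤ ∫ x, p γ x := integral_nonneg (p_nonneg γ)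
  have hM : (0:ℝ) ≤ (64 * γ) ^ γ := Real.rpow_nonneg (by positivity) _
  rcases le_or_gt a 1 with ha1 | ha1
  · have h1 : ∫ x, φm γ a x ≤ ∫ x, p γ x :=
      integral_mono (integrable_φm hγ a ha) (integrable_p hγ) (fun x => φm_le_p γ a x ha)
    rw [le_div_iff₀ (by linarith)]
    nlinarith
  · have hc : 0 < a / 16 := by linarith
    have h1 : ∫ x, φm γ a x ≤ ∫ x, (64 * γ) ^ γ * Real.exp (-(a / 16) * |x|) := by
      apply integral_mono (integrable_φm hγ a ha) ((integrable_exp_abs hc).const_mul _)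
      intro x
      unfold φm
      exact mul_le_mul_of_nonneg_right (p_le γ x hγ0 (by linarith)) (Real.exp_pos _).le
    rw [MeasureTheory.integral_const_mul, integral_exp_abs hc] at h1
    have h2 : (64 * γ) ^ γ * (2 / (a / 16)) = 32 * (64 * γ) ^ γ / a := by
      field_simp
      ring
    rw [h2] at h1
    apply h1.trans
    rw [div_le_div_iff₀ (by linarith) (by linarith)]
    nlinarith

lemma F_nonneg (β ϖ : ℝ) (v u : V) : 0 ≤ F β ϖ v u := by
  unfold F
  have h1 := wt_pos β ϖ v
  have h2 := wt_pos β ϖ u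
  positivity

lemma hyperplane_null (i : Fin 3) (c : ℝ) : (volume : Measure V) {u : V | u i = c} = 0 := by
  have hmp := EuclideanSpace.volume_preserving_symm_measurableEquiv_toLp (Fin 3)
  have hset : {u : V | u i = c}
      = (MeasurableEquiv.toLp 2 (Fin 3 → ℝ)).symm ⁻¹' {x : Fin 3 → ℝ | x i = c} := by
    ext u
    simp [MeasurableEquiv.coe_toLp_symm]
  have hms : MeasurableSet {x : Fin 3 → ℝ | x i = c} :=
    measurableSet_eq_fun (measurable_pi_apply i) measurable_const
  rw [hset, hmp.measure_preimage hms.nullMeasurableSet]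
  rw [volume_pi]
  exact Measure.pi_hyperplane (fun _ => (volume : Measure ℝ)) i c

lemma ae_ne (i : Fin 3) (c : ℝ) : ∀ᵐ u : V, u i ≠ c :=
  ae_iff.2 (by simpa using hyperplane_null i c)

lemma axis_bound {β ϖ : ℝ} (hβ : 3 < β) (hϖ0 : 0 < ϖ) (hϖ : ϖ ≤ 1/8) {a : ℝ} (ha : 0 ≤ a) :
    ∫ u : V, F β ϖ (a • e0) u ≤
      (2:ℝ) ^ (β/2) * ((∫ x, φs ((β+1)/2) x) ^ 2 *
        (2 * (∫ x, p ((β+1)/2) x) + 64 * (64 * ((β+1)/2)) ^ ((β+1)/2))) * (1 + a)⁻¹ := by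
  set γ := (β+1)/2 with hγdef
  have hγ : (2:ℝ) ≤ γ := by rw [hγdef]; linarith
  set v : V := a • e0 with hv
  have hv0 : v 0 = a := by
    simp [hv, e0, EuclideanSpace.single_apply]
  have hv1 : v 1 = 0 := by
    simp [hv, e0, EuclideanSpace.single_apply]
  have hv2 : v 2 = 0 := by
    simp [hv, e0, EuclideanSpace.single_apply]
  set f : Fin 3 → ℝ → ℝ :=
    fun i => if i = 0 then (fun t => φm γ a (a - t)) else (fun t => φs γ (0 - t)) with hf
  have hf0 : f 0 = fun t => φm γ a (a - t) := by rw [hf]; simp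
  have hf1 : f 1 = fun t => φs γ (0 - t) := by rw [hf]; simp
  have hf2 : f 2 = fun t => φs γ (0 - t) := by rw [hf]; simp
  have hfint : ∀ i, Integrable (f i) := by
    intro i
    by_cases h : i = 0
    · rw [h, hf0]
      exact (integrable_φm hγ a ha).comp_sub_left a
    · have hfi : f i = fun t => φs γ (0 - t) := by rw [hf]; simp [h]
      rw [hfi]
      exact (integrable_φs hγ).comp_sub_left 0
  set H : (Fin 3 → ℝ) → ℝ :=
    fun x => (2:ℝ)^(β/2) * ∏ i, f i (x i) with hH
  have hHint : Integrable H := (Integrable.fintype_prod hfint).const_mul _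
  have hmp := EuclideanSpace.volume_preserving_symm_measurableEquiv_toLp (Fin 3)
  have hcomp : ∀ u : V, H ((MeasurableEquiv.toLp 2 (Fin 3 → ℝ)).symm u)
      = (2:ℝ)^(β/2) * (f 0 (u 0) * f 1 (u 1) * f 2 (u 2)) := by
    intro u
    simp [hH, Fin.prod_univ_three, MeasurableEquiv.coe_toLp_symm]
  have hGint : Integrable (fun u : V => (2:ℝ)^(β/2) * (f 0 (u 0) * f 1 (u 1) * f 2 (u 2))) := by
    have := (hmp.integrable_comp_emb
      (MeasurableEquiv.measurableEmbedding _)).mpr hHint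
    apply this.congr
    filter_upwards with u
    exact hcomp u
  have key : ∫ u : V, F β ϖ v u
      ≤ ∫ u : V, (2:ℝ)^(β/2) * (f 0 (u 0) * f 1 (u 1) * f 2 (u 2)) := by
    apply integral_mono_of_nonneg ?_ hGint ?_
    · filter_upwards with u
      exact F_nonneg β ϖ v u
    · filter_upwards [ae_ne 1 0, ae_ne 2 0] with u hu1 hu2
      have hz1 : (v - u) 1 ≠ 0 := by
        intro h
        apply hu1
        have : v 1 - u 1 = 0 := by rw [← h]; rfl
        rw [hv1] at this
        linarith
      have hz2 : (v - u) 2 ≠ 0 := by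
        intro h
        apply hu2
        have : v 2 - u 2 = 0 := by rw [← h]; rfl
        rw [hv2] at this
        linarith
      have hinner : (@inner ℝ _ _ v (v - u) : ℝ) = a * (v - u) 0 := by
        rw [hv]
        rw [real_inner_smul_left]
        congr 1
        rw [show e0 = EuclideanSpace.single 0 1 from rfl, EuclideanSpace.inner_single_left]
        simp
      calc F β ϖ v u ≤ (2:ℝ) ^ (β / 2) * ((‖v - u‖ + ‖v - u‖⁻¹) * (1 + ‖v - u‖ ^ 2) ^ (β / 2) *
            Real.exp (-‖v - u‖ ^ 2 / 64) * Real.exp (-|@inner ℝ _ _ v (v - u)| / 16)) :=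
            ptwise hβ hϖ0 hϖ v u
        _ ≤ (2:ℝ) ^ (β / 2) * (φm γ a ((v - u) 0) * (φs γ ((v - u) 1) * φs γ ((v - u) 2))) := by
            apply mul_le_mul_of_nonneg_left ?_ (by positivity)
            rw [hinner]
            exact coord_bound hβ ha (v - u) hz1 hz2
        _ = (2:ℝ)^(β/2) * (f 0 (u 0) * f 1 (u 1) * f 2 (u 2)) := by
            have e0' : (v - u) 0 = a - u 0 := by
              show v 0 - u 0 = a - u 0
              rw [hv0]
            have e1' : (v - u) 1 = 0 - u 1 := by
              show v 1 - u 1 = 0 - u 1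
              rw [hv1]
            have e2' : (v - u) 2 = 0 - u 2 := by
              show v 2 - u 2 = 0 - u 2
              rw [hv2]
            rw [e0', e1', e2', hf0, hf1, hf2]
            ring
  have hval : ∫ u : V, (2:ℝ)^(β/2) * (f 0 (u 0) * f 1 (u 1) * f 2 (u 2))
      = (2:ℝ)^(β/2) * ((∫ x, φm γ a x) * ((∫ x, φs γ x) * (∫ x, φs γ x))) := by
    have h1 : ∫ u : V, (2:ℝ)^(β/2) * (f 0 (u 0) * f 1 (u 1) * f 2 (u 2))
        = ∫ x : Fin 3 → ℝ, H x := by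
      rw [← hmp.integral_comp']
      congr 1
      ext u
      exact (hcomp u).symm
    rw [h1, hH]
    rw [MeasureTheory.integral_const_mul]
    rw [MeasureTheory.integral_fintype_prod_volume_eq_prod f]
    rw [Fin.prod_univ_three]
    congr 1
    have i0 : ∫ x, f 0 x = ∫ x, φm γ a x := by
      rw [hf0]
      exact integral_sub_left_eq_self (φm γ a) volume a
    have i1 : ∫ x, f 1 x = ∫ x, φs γ x := by
      rw [hf1]
      exact integral_sub_left_eq_self (φs γ) volume 0
    have i2 : ∫ x, f 2 x = ∫ x, φs γ x := by
      rw [hf2]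
      exact integral_sub_left_eq_self (φs γ) volume 0
    rw [i0, i1, i2]
    ring
  have hKs : 0 ≤ ∫ x, φs γ x := integral_nonneg (φs_nonneg γ)
  have hB := intφm_le hγ ha
  calc ∫ u : V, F β ϖ v u
      ≤ (2:ℝ)^(β/2) * ((∫ x, φm γ a x) * ((∫ x, φs γ x) * (∫ x, φs γ x))) := by
        rw [← hval]; exact key
    _ = (2:ℝ)^(β/2) * (∫ x, φs γ x) ^ 2 * (∫ x, φm γ a x) := by ring
    _ ≤ (2:ℝ)^(β/2) * (∫ x, φs γ x) ^ 2 *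
        ((2 * (∫ x, p γ x) + 64 * (64 * γ) ^ γ) / (1 + a)) := by
        apply mul_le_mul_of_nonneg_left hB (by positivity)
    _ = (2:ℝ) ^ (β/2) * ((∫ x, φs γ x) ^ 2 *
        (2 * (∫ x, p γ x) + 64 * (64 * γ) ^ γ)) * (1 + a)⁻¹ := by
        rw [div_eq_mul_inv]; ring

end S7

end Aux

open S7

/-- The weighted Grad-kernel estimate
`∫ (|v−u| + |v−u|⁻¹) e^{−|v−u|²/8} e^{−(|v|²−|u|²)²/(8|v−u|²)} (w(v)/w(u)) du ≤ C (1+|v|)⁻¹`. -/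
theorem stmt7 (β ϖ : ℝ) (hβ : 3 < β) (hϖ0 : 0 < ϖ) (hϖ : ϖ ≤ 1/8) :
    ∃ C > (0:ℝ), ∀ v : V,
      ∫ u : V,
        (‖v - u‖ + ‖v - u‖⁻¹) * Real.exp (-‖v - u‖ ^ 2 / 8) *
          Real.exp (-(‖v‖ ^ 2 - ‖u‖ ^ 2) ^ 2 / (8 * ‖v - u‖ ^ 2)) *
          (wt β ϖ v / wt β ϖ u) ≤ C * (1 + ‖v‖)⁻¹ := by
  set γ := (β+1)/2 with hγdef
  set Ks := ∫ x, φs γ x with hKs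
  set Kp := ∫ x, p γ x with hKp
  set C' := (2:ℝ)^(β/2) * (Ks^2 * (2*Kp + 64*(64*γ)^γ)) with hC'
  have hKs0 : 0 ≤ Ks := integral_nonneg (φs_nonneg γ)
  have hKp0 : 0 ≤ Kp := integral_nonneg (p_nonneg γ)
  have hM0 : (0:ℝ) ≤ (64*γ)^γ := Real.rpow_nonneg (by positivity) _
  have hC'0 : 0 ≤ C' := by
    apply mul_nonneg (Real.rpow_nonneg (by norm_num) _)
    apply mul_nonneg (sq_nonneg _)
    linarith
  refine ⟨C' + 1, by linarith, fun v => ?_⟩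
  set a := ‖v‖ with hadef
  have ha : 0 ≤ a := norm_nonneg v
  have hnorm : ‖a • e0‖ = ‖v‖ := by
    rw [norm_smul]
    unfold e0
    rw [EuclideanSpace.norm_single]
    simp [abs_of_nonneg ha, hadef]
  set R := Submodule.reflection (ℝ ∙ ((a • e0) - v))ᗮ with hRdef
  have hR : R (a • e0) = v := Submodule.reflection_sub hnorm
  have hFR : ∀ u, F β ϖ v (R u) = F β ϖ (a • e0) u := by
    intro u
    have h1 : ‖v - R u‖ = ‖a • e0 - u‖ := by
      rw [← hR, ← map_sub, R.norm_map]
    have h2 : ‖(R u : V)‖ = ‖u‖ := R.norm_map u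
    have h3 : ‖v‖ = ‖a • e0‖ := hnorm.symm
    simp only [F, wt, h1, h2, h3]
  have hRint : ∫ u : V, F β ϖ v u = ∫ u : V, F β ϖ (a • e0) u := by
    calc ∫ u : V, F β ϖ v u
        = ∫ u : V, F β ϖ v (R u) :=
          (R.measurePreserving.integral_comp R.toMeasurableEquiv.measurableEmbedding
            (fun u => F β ϖ v u)).symm
      _ = ∫ u : V, F β ϖ (a • e0) u := by
          apply integral_congr_ae
          filter_upwards with u
          exact hFR u
  show ∫ u : V, F β ϖ v u ≤ (C' + 1) * (1 + a)⁻¹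
  rw [hRint]
  calc ∫ u : V, F β ϖ (a • e0) u
      ≤ (2:ℝ) ^ (β/2) * ((∫ x, φs ((β+1)/2) x) ^ 2 *
        (2 * (∫ x, p ((β+1)/2) x) + 64 * (64 * ((β+1)/2)) ^ ((β+1)/2))) * (1 + a)⁻¹ :=
        axis_bound hβ hϖ0 hϖ ha
    _ = C' * (1 + a)⁻¹ := by rw [hC', hγdef, hKs, hKp]
    _ ≤ (C' + 1) * (1 + a)⁻¹ := by
        apply mul_le_mul_of_nonneg_right (by linarith) (by positivity)

end
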